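/- There exist universal constants γ′, ε′ > 0 such that the following holds for all sufficiently large m, n ∈ ℕ: let H be a bipartite graph on [n] with m edges, and let D be the random digraph 𝔾⃗(n,p) with p ≤ ε′·n^{−1/2}. Then the probability that simultaneously e(H ∩ D̂) ≥ m/16 and Δ(D) ≤ 5pn − 1 is at most exp(−γ′·m·n^{−1/2}). -/

import Mathlib

open Finset

namespace Stmt4Aux

variable {α : Type*} [DecidableEq α]

/-- Bernoulli-weighted sum over subsets of `E`. -/
def bsum (p q : ℝ) (E : Finset α) (g : Finset α → ℝ) : ℝ :=
  ∑ D ∈ E.powerset, p ^ D.card * q ^ (E.card - D.card) * g D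

lemma bsum_insert (p q : ℝ) (a : α) (E : Finset α) (ha : a ∉ E) (g : Finset α → ℝ) :
    bsum p q (insert a E) g
      = ∑ D ∈ E.powerset, p ^ D.card * q ^ (E.card - D.card) *
          (q * g D + p * g (insert a D)) := by
  unfold bsum
  rw [Finset.powerset_insert, Finset.sum_union, Finset.sum_image]
  · have h1 : ∀ D ∈ E.powerset,
        p ^ D.card * q ^ ((insert a E).card - D.card) * g D
          = p ^ D.card * q ^ (E.card - D.card) * (q * g D) := by
      intro D hD
      have hDE : D ⊆ E := Finset.mem_powerset.mp hD
      have hcard : D.card ≤ E.card := Finset.card_le_card hDE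
      rw [Finset.card_insert_of_notMem ha]
      have : E.card + 1 - D.card = (E.card - D.card) + 1 := by omega
      rw [this, pow_succ]
      ring
    have h2 : ∀ D ∈ E.powerset,
        p ^ (insert a D).card * q ^ ((insert a E).card - (insert a D).card) * g (insert a D)
          = p ^ D.card * q ^ (E.card - D.card) * (p * g (insert a D)) := by
      intro D hD
      have hDE : D ⊆ E := Finset.mem_powerset.mp hD
      have haD : a ∉ D := fun h => ha (hDE h)
      rw [Finset.card_insert_of_notMem haD, Finset.card_insert_of_notMem ha]
      have : E.card + 1 - (D.card + 1) = E.card - D.card := by omega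
      rw [this, pow_succ]
      ring
    rw [Finset.sum_congr rfl h1, Finset.sum_congr rfl h2, ← Finset.sum_add_distrib]
    apply Finset.sum_congr rfl
    intro D _; ring
  · intro D hD D' hD' h
    have haD : a ∉ D := fun hx => ha (Finset.mem_powerset.mp hD hx)
    have haD' : a ∉ D' := fun hx => ha (Finset.mem_powerset.mp hD' hx)
    calc D = (insert a D).erase a := (Finset.erase_insert haD).symm
    _ = (insert a D').erase a := by rw [h]
    _ = D' := Finset.erase_insert haD'
  · rw [Finset.disjoint_right]
    intro D hD hD'
    rcases Finset.mem_image.mp hD with ⟨D', hD', rfl⟩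
    exact ha (Finset.mem_powerset.mp hD' (Finset.mem_insert_self a D'))


-- scalar step inequality
lemma step_ineq {p x y : ℝ} (hp : 0 ≤ p) (hp1 : p ≤ 1) (hx0 : 0 ≤ x) (hx : x ≤ 1/2)
    (hxy : x ≤ y) : (1 - p) + p * Real.exp x ≤ Real.exp (2 * p * y) := by
  have h1 : Real.exp x ≤ 1 + 2 * x := by
    have hex : 1 - x ≤ Real.exp (-x) := by
      have := Real.add_one_le_exp (-x); linarith
    have hpos : (0:ℝ) < 1 - x := by linarith
    have hepos : (0:ℝ) < Real.exp x := Real.exp_pos x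
    have hprod : Real.exp x * Real.exp (-x) = 1 := by
      rw [← Real.exp_add]; simp
    nlinarith [Real.exp_pos (-x)]
  have h2 : (1 - p) + p * Real.exp x ≤ 1 + 2 * p * x := by nlinarith
  have h3 : 1 + 2 * p * x ≤ 1 + 2 * p * y := by nlinarith
  have h4 : 1 + 2 * p * y ≤ Real.exp (2 * p * y) := by
    have := Real.add_one_le_exp (2 * p * y); linarith
  linarith

theorem master (R : α → α → Prop) [DecidableRel R] (ord : α → ℕ)
    (hord : ∀ a b, R a b → ord a < ord b)
    (p lam K : ℝ) (hp : 0 ≤ p) (hp1 : p ≤ 1) (hlam : 0 ≤ lam) (hK : 0 ≤ K)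
    (E : Finset α) : ∀ c : α → ℝ, (∀ b, 0 ≤ c b) →
    (∀ b ∈ E, lam * (c b + 2*p*((E.filter (fun x => R x b)).card : ℝ) + K) ≤ 1/2) →
    bsum p (1-p) E
        (fun D => Real.exp (lam * ∑ a ∈ D, (c a + min ((D.filter (fun b => R a b)).card : ℝ) K)))
      ≤ Real.exp (lam * ∑ b ∈ E, 2*p*(c b + 2*p*((E.filter (fun x => R x b)).card : ℝ))) := by
  classical
  induction E using Finset.strongInduction with
  | _ E ih =>
    intro c hc hcond
    rcases E.eq_empty_or_nonempty with rfl | hne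
    · simp [bsum]
    obtain ⟨a, haE, hamin⟩ := E.exists_min_image ord hne
    have hEeq : insert a (E.erase a) = E := Finset.insert_erase haE
    set E' := E.erase a with hE'
    have haE' : a ∉ E' := Finset.notMem_erase a E
    have hnRa : ∀ b ∈ E, ¬ R b a := by
      intro b hb hR
      exact absurd (hamin b hb) (not_le.mpr (hord b a hR))
    have hnRaa : ¬ R a a := hnRa a haE
    -- abbreviations
    set g : Finset α → ℝ := fun D =>
      Real.exp (lam * ∑ x ∈ D, (c x + min ((D.filter (fun b => R x b)).card : ℝ) K)) with hg
    set c' : α → ℝ := fun b => c b + 2*p*(if R a b then 1 else 0) with hc'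
    have hc'0 : ∀ b, 0 ≤ c' b := by
      intro b; simp only [hc']
      have : (0:ℝ) ≤ (if R a b then (1:ℝ) else 0) := by positivity
      nlinarith [hc b]
    -- key pointwise identity/inequality for D ⊆ E'
    have key : ∀ D ∈ E'.powerset,
        (1-p) * g D + p * g (insert a D)
          ≤ Real.exp (lam * (2*p*(c a))) *
            Real.exp (lam * ∑ x ∈ D, (c' x + min ((D.filter (fun b => R x b)).card : ℝ) K)) := by
      intro D hD
      have hDE' : D ⊆ E' := Finset.mem_powerset.mp hD
      have hDE : D ⊆ E := hDE'.trans (Finset.erase_subset a E)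
      have haD : a ∉ D := fun h => haE' (hDE' h)
      -- ν_D a
      set nu : ℝ := ((D.filter (fun b => R a b)).card : ℝ) with hnu
      have hnu0 : (0:ℝ) ≤ nu := by positivity
      -- g (insert a D) = exp(lam * (ca + min nu K)) * g D
      have hins : g (insert a D) = Real.exp (lam * (c a + min nu K)) * g D := by
        simp only [hg, ← Real.exp_add, ← mul_add]
        congr 1
        rw [Finset.sum_insert haD]
        have h1 : (insert a D).filter (fun b => R a b) = D.filter (fun b => R a b) := by
          rw [Finset.filter_insert, if_neg hnRaa]
        have h2 : ∀ x ∈ D, ((insert a D).filter (fun b => R x b)).card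
            = (D.filter (fun b => R x b)).card := by
          intro x hx
          rw [Finset.filter_insert, if_neg (hnRa x (hDE hx))]
        rw [h1]
        have h3 : ∑ x ∈ D, (c x + min (((insert a D).filter (fun b => R x b)).card : ℝ) K)
            = ∑ x ∈ D, (c x + min ((D.filter (fun b => R x b)).card : ℝ) K) := by
          apply Finset.sum_congr rfl
          intro x hx; rw [h2 x hx]
        rw [h3]
      -- the scalar bound
      have hxle : lam * (c a + min nu K) ≤ 1/2 := by
        have hca := hcond a haE
        have hfilter : (0:ℝ) ≤ 2*p*((E.filter (fun x => R x a)).card : ℝ) := by positivity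
        have hminK : min nu K ≤ K := min_le_right _ _
        nlinarith [hc a, hlam]
      have hx0 : 0 ≤ lam * (c a + min nu K) := by
        have : 0 ≤ min nu K := le_min hnu0 hK
        have := hc a; positivity
      have hxy : lam * (c a + min nu K) ≤ lam * (c a + nu) := by
        have : min nu K ≤ nu := min_le_left _ _
        nlinarith
      have hstep : (1-p) + p * Real.exp (lam * (c a + min nu K))
          ≤ Real.exp (2 * p * (lam * (c a + nu))) :=
        step_ineq hp hp1 hx0 hxle hxy
      have hgpos : 0 < g D := Real.exp_pos _
      have : (1-p) * g D + p * g (insert a D)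
          = ((1-p) + p * Real.exp (lam * (c a + min nu K))) * g D := by
        rw [hins]; ring
      rw [this]
      have hle2 : ((1-p) + p * Real.exp (lam * (c a + min nu K))) * g D
          ≤ Real.exp (2 * p * (lam * (c a + nu))) * g D := by
        apply mul_le_mul_of_nonneg_right hstep (le_of_lt hgpos)
      refine hle2.trans (le_of_eq ?_)
      simp only [hg, ← Real.exp_add]
      congr 1
      have hsum : ∑ x ∈ D, (c' x + min ((D.filter (fun b => R x b)).card : ℝ) K)
          = (∑ x ∈ D, (c x + min ((D.filter (fun b => R x b)).card : ℝ) K)) + 2*p*nu := by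
        simp only [hc']
        have hre : ∀ x ∈ D, ((c x + 2*p*(if R a x then (1:ℝ) else 0)) + min ((D.filter (fun b => R x b)).card : ℝ) K)
            = ((c x + min ((D.filter (fun b => R x b)).card : ℝ) K) + 2*p*(if R a x then (1:ℝ) else 0)) := by
          intro x _; ring
        rw [Finset.sum_congr rfl hre, Finset.sum_add_distrib, ← Finset.mul_sum, Finset.sum_boole]
      rw [hsum]; ring
    -- now assemble
    have hsplit : bsum p (1-p) E g = ∑ D ∈ E'.powerset, p ^ D.card * (1-p) ^ (E'.card - D.card) *
        ((1-p) * g D + p * g (insert a D)) := by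
      rw [← hEeq, bsum_insert p (1-p) a E' haE' g]
    have hwnn : ∀ D ∈ E'.powerset, (0:ℝ) ≤ p ^ D.card * (1-p) ^ (E'.card - D.card) := by
      intro D _
      have h1 : (0:ℝ) ≤ 1 - p := by linarith
      positivity
    set g' : Finset α → ℝ := fun D =>
      Real.exp (lam * ∑ x ∈ D, (c' x + min ((D.filter (fun b => R x b)).card : ℝ) K)) with hg'
    have hstep1 : bsum p (1-p) E g ≤ Real.exp (lam * (2*p*(c a))) * bsum p (1-p) E' g' := by
      rw [hsplit]
      have : Real.exp (lam * (2*p*(c a))) * bsum p (1-p) E' g'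
          = ∑ D ∈ E'.powerset, p ^ D.card * (1-p) ^ (E'.card - D.card) *
              (Real.exp (lam * (2*p*(c a))) * g' D) := by
        rw [bsum, Finset.mul_sum]
        apply Finset.sum_congr rfl
        intro D _; ring
      rw [this]
      apply Finset.sum_le_sum
      intro D hD
      exact mul_le_mul_of_nonneg_left (key D hD) (hwnn D hD)
    -- r_E b decomposition for b ∈ E'
    have hrE : ∀ b, b ∈ E' → ((E.filter (fun x => R x b)).card : ℝ)
        = ((E'.filter (fun x => R x b)).card : ℝ) + (if R a b then (1:ℝ) else 0) := by
      intro b _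
      rw [← hEeq, Finset.filter_insert]
      by_cases hab : R a b
      · rw [if_pos hab, if_pos hab, Finset.card_insert_of_notMem]
        · push_cast; ring
        · intro hmem
          exact haE' (Finset.mem_of_mem_filter a hmem)
      · rw [if_neg hab, if_neg hab]; ring
    have hcond' : ∀ b ∈ E', lam * (c' b + 2*p*((E'.filter (fun x => R x b)).card : ℝ) + K) ≤ 1/2 := by
      intro b hb
      have hbE : b ∈ E := (Finset.erase_subset a E) hb
      have := hcond b hbE
      have heq : c' b + 2*p*((E'.filter (fun x => R x b)).card : ℝ)
          = c b + 2*p*((E.filter (fun x => R x b)).card : ℝ) := by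
        simp only [hc']
        rw [hrE b hb]; ring
      calc lam * (c' b + 2*p*((E'.filter (fun x => R x b)).card : ℝ) + K)
          = lam * (c b + 2*p*((E.filter (fun x => R x b)).card : ℝ) + K) := by rw [← heq]
        _ ≤ 1/2 := this
    have hih : bsum p (1-p) E' g' ≤
        Real.exp (lam * ∑ b ∈ E', 2*p*(c' b + 2*p*((E'.filter (fun x => R x b)).card : ℝ))) :=
      ih E' (Finset.erase_ssubset haE) c' hc'0 hcond'
    have hfinal : Real.exp (lam * (2*p*(c a))) *
        Real.exp (lam * ∑ b ∈ E', 2*p*(c' b + 2*p*((E'.filter (fun x => R x b)).card : ℝ)))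
        ≤ Real.exp (lam * ∑ b ∈ E, 2*p*(c b + 2*p*((E.filter (fun x => R x b)).card : ℝ))) := by
      rw [← Real.exp_add]
      apply Real.exp_le_exp.mpr
      have hsumE : ∑ b ∈ E, 2*p*(c b + 2*p*((E.filter (fun x => R x b)).card : ℝ))
          = 2*p*(c a + 2*p*((E.filter (fun x => R x a)).card : ℝ))
            + ∑ b ∈ E', 2*p*(c b + 2*p*((E.filter (fun x => R x b)).card : ℝ)) := by
        rw [← hEeq, Finset.sum_insert haE']
      have hsumE' : ∀ b ∈ E', 2*p*(c' b + 2*p*((E'.filter (fun x => R x b)).card : ℝ))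
          = 2*p*(c b + 2*p*((E.filter (fun x => R x b)).card : ℝ)) := by
        intro b hb
        simp only [hc']
        rw [hrE b hb]; ring
      rw [Finset.sum_congr rfl hsumE', hsumE]
      have hra : (0:ℝ) ≤ 2*p*(2*p*((E.filter (fun x => R x a)).card : ℝ)) := by positivity
      nlinarith [hc a, hlam, hra]
    calc bsum p (1-p) E g ≤ Real.exp (lam * (2*p*(c a))) * bsum p (1-p) E' g' := hstep1
      _ ≤ Real.exp (lam * (2*p*(c a))) *
          Real.exp (lam * ∑ b ∈ E', 2*p*(c' b + 2*p*((E'.filter (fun x => R x b)).card : ℝ))) := by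
        apply mul_le_mul_of_nonneg_left hih (le_of_lt (Real.exp_pos _))
      _ ≤ _ := hfinal

end Stmt4Aux

/-- For a digraph `D` on `[n]` (a set of ordered pairs of distinct vertices), `hatGraph D`
is the undirected graph whose edges are pairs of distinct vertices having a common
in-neighbour in `D`. -/
def hatGraph {n : ℕ} (D : Finset (Fin n × Fin n)) : SimpleGraph (Fin n) where
  Adj u v := u ≠ v ∧ ∃ w, (w, u) ∈ D ∧ (w, v) ∈ D
  symm := by
    constructor
    rintro u v ⟨h, w, h1, h2⟩
    exact ⟨h.symm, w, h2, h1⟩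
  loopless := by
    constructor
    rintro v ⟨h, -⟩
    exact h rfl


namespace Stmt4Aux

noncomputable def lo {n : ℕ} (q : Sym2 (Fin n)) : Fin n :=
  Sym2.lift ⟨fun a b => min a b, fun a b => min_comm a b⟩ q

noncomputable def hi {n : ℕ} (q : Sym2 (Fin n)) : Fin n :=
  Sym2.lift ⟨fun a b => max a b, fun a b => max_comm a b⟩ q

lemma mk_lo_hi {n : ℕ} (q : Sym2 (Fin n)) : s(lo q, hi q) = q := by
  induction q using Sym2.ind with
  | _ a b =>
    simp only [lo, hi, Sym2.lift_mk]
    rcases le_total a b with h | h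
    · rw [min_eq_left h, max_eq_right h]
    · rw [min_eq_right h, max_eq_left h, Sym2.eq_swap]

open Classical in
lemma step1 {n : ℕ} (H : SimpleGraph (Fin n)) (D : Finset (Fin n × Fin n)) :
    ((H ⊓ hatGraph D).edgeSet.ncard : ℕ) ≤
      (D.sigma (fun a => D.filter (fun b => a.1 = b.1 ∧ a.2 < b.2 ∧ H.Adj a.2 b.2))).card := by
  classical
  have hfin : (H ⊓ hatGraph D).edgeSet.Finite := Set.toFinite _
  rw [Set.ncard_eq_toFinset_card _ hfin]
  have hadj : ∀ q ∈ (H ⊓ hatGraph D).edgeSet, (H ⊓ hatGraph D).Adj (lo q) (hi q) := by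
    intro q hq
    rw [← mk_lo_hi q] at hq
    exact (SimpleGraph.mem_edgeSet _).mp hq
  have hlt : ∀ q ∈ (H ⊓ hatGraph D).edgeSet, lo q < hi q := by
    intro q hq
    have hle : lo q ≤ hi q := by
      induction q using Sym2.ind with
      | _ a b => simp only [lo, hi, Sym2.lift_mk]; exact min_le_max
    exact lt_of_le_of_ne hle (hadj q hq).2.1
  have hwit : ∀ q ∈ (H ⊓ hatGraph D).edgeSet, ∃ w, (w, lo q) ∈ D ∧ (w, hi q) ∈ D := by
    intro q hq
    exact (hadj q hq).2.2
  set F : Sym2 (Fin n) → ((_ : Fin n × Fin n) × (Fin n × Fin n)) := fun q =>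
    if hq : ∃ w, (w, lo q) ∈ D ∧ (w, hi q) ∈ D then
      ⟨(Classical.choose hq, lo q), (Classical.choose hq, hi q)⟩
    else ⟨(q.out.1, q.out.1), (q.out.1, q.out.1)⟩ with hF
  apply Finset.card_le_card_of_injOn F
  · intro q hq
    rw [Finset.mem_coe, Set.Finite.mem_toFinset] at hq
    have hw := hwit q hq
    have hH : H.Adj (lo q) (hi q) := (hadj q hq).1
    rw [hF]
    simp only [dif_pos hw]
    have hspec := Classical.choose_spec hw
    rw [Finset.mem_coe, Finset.mem_sigma]
    refine ⟨hspec.1, ?_⟩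
    rw [Finset.mem_filter]
    exact ⟨hspec.2, rfl, hlt q hq, hH⟩
  · intro q hq q' hq' heq
    rw [Set.Finite.coe_toFinset] at hq hq'
    have hw := hwit q hq
    have hw' := hwit q' hq'
    rw [hF] at heq
    simp only [dif_pos hw, dif_pos hw'] at heq
    have h1 : lo q = lo q' := by
      have := congrArg (fun z => z.1.2) heq
      simpa using this
    have h2 : hi q = hi q' := by
      have := congrArg (fun z : ((_ : Fin n × Fin n) × (Fin n × Fin n)) => z.2.2) heq
      simpa using this
    rw [← mk_lo_hi q, ← mk_lo_hi q', h1, h2]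


open Classical in
lemma count_r {n : ℕ} (H : SimpleGraph (Fin n)) (b : Fin n × Fin n) :
    (((Finset.univ : Finset (Fin n)).offDiag.filter
        (fun a => a.1 = b.1 ∧ a.2 < b.2 ∧ H.Adj a.2 b.2)).card) ≤ n := by
  classical
  have := Finset.card_le_card_of_injOn (fun a : Fin n × Fin n => a.2)
    (s := (Finset.univ : Finset (Fin n)).offDiag.filter
        (fun a => a.1 = b.1 ∧ a.2 < b.2 ∧ H.Adj a.2 b.2))
    (t := (Finset.univ : Finset (Fin n)))
    (fun a _ => Finset.mem_univ _) ?_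
  · simpa using this
  · intro a ha a' ha' h
    simp only [Finset.coe_filter, Set.mem_setOf_eq] at ha ha'
    have h1 : a.1 = a'.1 := ha.2.1.trans ha'.2.1.symm
    exact Prod.ext h1 h

open Classical in
lemma count_S {n : ℕ} (H : SimpleGraph (Fin n)) :
    (((Finset.univ : Finset (Fin n)).offDiag.sigma
        (fun b => (Finset.univ : Finset (Fin n)).offDiag.filter
          (fun a => a.1 = b.1 ∧ a.2 < b.2 ∧ H.Adj a.2 b.2))).card) ≤ n * H.edgeSet.ncard := by
  classical
  have hfin : H.edgeSet.Finite := Set.toFinite _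
  have htarget : ((Finset.univ : Finset (Fin n)) ×ˢ hfin.toFinset).card = n * H.edgeSet.ncard := by
    rw [Finset.card_product, Finset.card_univ, Fintype.card_fin,
      Set.ncard_eq_toFinset_card _ hfin]
  rw [← htarget]
  apply Finset.card_le_card_of_injOn
    (fun z : ((_ : Fin n × Fin n) × (Fin n × Fin n)) => (z.1.1, s(z.2.2, z.1.2)))
  · rintro ⟨b, a⟩ hz
    rw [Finset.mem_coe, Finset.mem_sigma, Finset.mem_filter] at hz
    obtain ⟨hb, ha, h1, h2, h3⟩ := hz
    rw [Finset.mem_coe, Finset.mem_product]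
    refine ⟨Finset.mem_univ _, ?_⟩
    rw [Set.Finite.mem_toFinset]
    exact (SimpleGraph.mem_edgeSet _).mpr h3
  · rintro ⟨b, a⟩ hz ⟨b', a'⟩ hz' heq
    simp only [Finset.coe_sigma] at hz hz'
    rw [Set.mem_sigma_iff] at hz hz'
    have ha : a ∈ _ := hz.2
    have ha' : a' ∈ _ := hz'.2
    rw [Finset.mem_coe, Finset.mem_filter] at ha ha'
    obtain ⟨-, h1, h2, -⟩ := ha
    obtain ⟨-, h1', h2', -⟩ := ha'
    simp only at heq
    obtain ⟨hb1, hsym⟩ := Prod.ext_iff.mp heq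
    simp only at hb1 hsym
    rw [Sym2.eq_iff] at hsym
    have h22 : a.2 = a'.2 ∧ b.2 = b'.2 := by
      rcases hsym with ⟨x, y⟩ | ⟨x, y⟩
      · exact ⟨x, y⟩
      · exfalso
        rw [x] at h2
        rw [← y] at h2'
        exact absurd (h2.trans h2') (lt_irrefl _)
    have hbeq : b = b' := Prod.ext hb1 h22.2
    have haeq : a = a' := Prod.ext (h1.trans (hb1.trans h1'.symm)) h22.1
    subst hbeq; subst haeq; rfl


end Stmt4Aux

open Classical in
/-- There exist γ', ε' > 0 such that for all sufficiently large m, n: if H is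
a bipartite graph on [n] with m edges and D ~ 𝔾⃗(n,p) with p ≤ ε' n^{-1/2}, then
P(e(H ∩ D̂) ≥ m/16 ∧ Δ(D) ≤ 5pn − 1) ≤ exp(−γ' m n^{-1/2}). The probability is written
as an explicit sum over all digraphs D (subsets of the off-diagonal ordered pairs),
weighted by p^{|D|}(1-p)^{n(n-1)-|D|}; Δ(D) is the maximum out-degree. -/
theorem stmt4 :
    ∃ γ' ε' : ℝ, 0 < γ' ∧ 0 < ε' ∧ ∃ N : ℕ, ∀ m n : ℕ, N ≤ m → N ≤ n →
      ∀ H : SimpleGraph (Fin n), H.Colorable 2 → H.edgeSet.ncard = m →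
        ∀ p : ℝ, 0 ≤ p → p ≤ ε' / Real.sqrt n →
          (∑ D ∈ (Finset.univ : Finset (Fin n)).offDiag.powerset,
              if ((m : ℝ) / 16 ≤ (((H ⊓ hatGraph D).edgeSet.ncard : ℕ) : ℝ) ∧
                  ∀ v : Fin n, (((D.filter (fun e => e.1 = v)).card : ℕ) : ℝ) ≤ 5 * p * n - 1)
              then p ^ D.card * (1 - p) ^ (n * (n - 1) - D.card) else 0) ≤
            Real.exp (-γ' * (m : ℝ) / Real.sqrt n) := by
  classical
  refine ⟨1/128, 1/16, by norm_num, by norm_num, 1, ?_⟩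
  intro m n hm hn H _hcol hHm p hp0 hpe
  -- basic facts
  have hn1 : (1:ℝ) ≤ (n:ℝ) := by exact_mod_cast hn
  have hn0 : (0:ℝ) ≤ (n:ℝ) := by linarith
  have hsq1 : (1:ℝ) ≤ Real.sqrt n := by
    rw [show (1:ℝ) = Real.sqrt 1 by simp]
    exact Real.sqrt_le_sqrt hn1
  have hsqpos : (0:ℝ) < Real.sqrt n := by linarith
  have hsqsq : Real.sqrt n * Real.sqrt n = (n:ℝ) := Real.mul_self_sqrt hn0
  have hp16 : p ≤ 1/(16 * Real.sqrt n) := by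
    have : (1:ℝ)/16 / Real.sqrt n = 1/(16*Real.sqrt n) := by
      field_simp
    linarith [hpe, this ▸ hpe]
  have hp1 : p ≤ 1 := by
    have h1 : 1/(16*Real.sqrt n) ≤ 1/16 := by
      rw [div_le_div_iff₀ (by positivity) (by norm_num)]
      nlinarith
    linarith [(by norm_num : (1:ℝ)/16 ≤ 1)]
  have hp16' : p * (16 * Real.sqrt n) ≤ 1 := (le_div_iff₀ (by positivity)).mp hp16
  have hpn : p * n ≤ Real.sqrt n / 16 := by
    nlinarith [mul_le_mul_of_nonneg_right hp16' (le_of_lt hsqpos)]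
  have hp2n : p^2 * n ≤ 1/256 := by
    nlinarith [mul_le_mul hp16' hp16' (by positivity : (0:ℝ) ≤ p * (16*Real.sqrt n)) (by norm_num : (0:ℝ) ≤ 1)]
  set lam : ℝ := 1/(4*Real.sqrt n) with hlamdef
  have hlam0 : 0 < lam := by positivity
  set K : ℝ := 5*p*(n:ℝ) with hKdef
  have hK0 : 0 ≤ K := by positivity
  set Ω : Finset (Fin n × Fin n) := (Finset.univ : Finset (Fin n)).offDiag with hΩdef
  set R : (Fin n × Fin n) → (Fin n × Fin n) → Prop :=
    fun a b => a.1 = b.1 ∧ a.2 < b.2 ∧ H.Adj a.2 b.2 with hRdef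
  letI : DecidableRel R := fun a b => Classical.propDecidable _
  have hΩcard : Ω.card = n * (n-1) := by
    rw [hΩdef, Finset.offDiag_card, Finset.card_univ, Fintype.card_fin]
    cases n with
    | zero => rfl
    | succ k => simp [Nat.succ_sub_one, Nat.mul_succ, Nat.succ_mul]
    -- the master-lemma function with c = 0
  set c0 : (Fin n × Fin n) → ℝ := fun _ => 0 with hc0def
  set g : Finset (Fin n × Fin n) → ℝ := fun D =>
    Real.exp (lam * ∑ a ∈ D, (c0 a + min ((D.filter (fun b => R a b)).card : ℝ) K)) with hgdef
  have hlam' : lam * Real.sqrt n = 1/4 := by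
    rw [hlamdef]; field_simp
  -- pointwise bound
  have hpoint : ∀ D ∈ Ω.powerset,
      (if ((m : ℝ) / 16 ≤ (((H ⊓ hatGraph D).edgeSet.ncard : ℕ) : ℝ) ∧
          ∀ v : Fin n, (((D.filter (fun e => e.1 = v)).card : ℕ) : ℝ) ≤ 5 * p * n - 1)
        then p ^ D.card * (1 - p) ^ (n * (n - 1) - D.card) else 0)
      ≤ Real.exp (-(lam * (m/16))) * (p ^ D.card * (1 - p) ^ (Ω.card - D.card) * g D) := by
    intro D hD
    have hw0 : (0:ℝ) ≤ p ^ D.card * (1 - p) ^ (Ω.card - D.card) :=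
      mul_nonneg (pow_nonneg hp0 _) (pow_nonneg (by linarith) _)
    split_ifs with hcondD
    · obtain ⟨hm16, hdeg⟩ := hcondD
      have hcollapse : ∀ a ∈ D, min ((D.filter (fun b => R a b)).card : ℝ) K
          = ((D.filter (fun b => R a b)).card : ℝ) := by
        intro a ha
        apply min_eq_left
        have hsub : D.filter (fun b => R a b) ⊆ D.filter (fun e => e.1 = a.1) := by
          intro b hb
          rw [Finset.mem_filter] at hb ⊢
          exact ⟨hb.1, (hb.2.1).symm⟩
        have hcard : ((D.filter (fun b => R a b)).card : ℝ)
            ≤ ((D.filter (fun e => e.1 = a.1)).card : ℝ) := by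
          exact_mod_cast Finset.card_le_card hsub
        have hd := hdeg a.1
        rw [hKdef]
        linarith
      have hsum : (m:ℝ)/16 ≤ ∑ a ∈ D, (c0 a + min ((D.filter (fun b => R a b)).card : ℝ) K) := by
        have h1 : ∑ a ∈ D, (c0 a + min ((D.filter (fun b => R a b)).card : ℝ) K)
            = ∑ a ∈ D, ((D.filter (fun b => R a b)).card : ℝ) := by
          apply Finset.sum_congr rfl
          intro a ha
          rw [hcollapse a ha, hc0def]
          simp
        have h2 : ((D.sigma (fun a => D.filter (fun b => R a b))).card : ℝ)
            = ∑ a ∈ D, ((D.filter (fun b => R a b)).card : ℝ) := by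
          rw [Finset.card_sigma]
          push_cast
          rfl
        have h3 := (Nat.cast_le (α := ℝ)).mpr (Stmt4Aux.step1 H D)
        have h3' : ((H ⊓ hatGraph D).edgeSet.ncard : ℝ)
            ≤ ((D.sigma (fun a => D.filter (fun b => R a b))).card : ℝ) := by
          convert h3 using 5 with a <;> (try simp only [hRdef]) <;> (try congr!)
        rw [h1, ← h2]
        exact le_trans hm16 h3'
      have hg1 : Real.exp (lam * ((m:ℝ)/16)) ≤ g D := by
        rw [hgdef]
        exact Real.exp_le_exp.mpr (mul_le_mul_of_nonneg_left hsum hlam0.le)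
      rw [← hΩcard]
      calc p ^ D.card * (1 - p) ^ (Ω.card - D.card)
          = Real.exp (-(lam * ((m:ℝ)/16))) * (p ^ D.card * (1 - p) ^ (Ω.card - D.card)
              * Real.exp (lam * ((m:ℝ)/16))) := by
            have hone : Real.exp (-(lam * ((m:ℝ)/16))) * Real.exp (lam * ((m:ℝ)/16)) = 1 := by
              rw [← Real.exp_add]; simp
            linear_combination (-(p ^ D.card * (1 - p) ^ (Ω.card - D.card))) * hone
        _ ≤ Real.exp (-(lam * ((m:ℝ)/16))) * (p ^ D.card * (1 - p) ^ (Ω.card - D.card) * g D) := by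
            apply mul_le_mul_of_nonneg_left _ (Real.exp_pos _).le
            exact mul_le_mul_of_nonneg_left hg1 hw0
    · exact mul_nonneg (Real.exp_pos _).le (mul_nonneg hw0 (Real.exp_pos _).le)
  -- apply master
  have hord : ∀ a b : Fin n × Fin n, R a b → (fun z : Fin n × Fin n => (z.2 : ℕ)) a
      < (fun z : Fin n × Fin n => (z.2 : ℕ)) b := by
    intro a b hab
    exact hab.2.1
  have hcond : ∀ b ∈ Ω, lam * (c0 b + 2*p*((Ω.filter (fun x => R x b)).card : ℝ) + K) ≤ 1/2 := by
    intro b _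
    have hr : ((Ω.filter (fun x => R x b)).card : ℝ) ≤ (n:ℝ) := by
      have hcr := (Nat.cast_le (α := ℝ)).mpr (Stmt4Aux.count_r H b)
      convert hcr using 4 <;> (try simp only [hRdef]) <;> (try congr!)
    have hfilnn : (0:ℝ) ≤ ((Ω.filter (fun x => R x b)).card : ℝ) := Nat.cast_nonneg _
    have h7 : lam * (c0 b + 2*p*((Ω.filter (fun x => R x b)).card : ℝ) + K) ≤ lam * (7*(p*(n:ℝ))) := by
      apply mul_le_mul_of_nonneg_left _ hlam0.le
      rw [hc0def, hKdef]
      simp only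
      nlinarith
    have h8 : lam * (7*(p*(n:ℝ))) ≤ 7/64 := by
      nlinarith [mul_le_mul_of_nonneg_left hpn hlam0.le, hlam']
    exact le_trans h7 (le_trans h8 (by norm_num))
  have hmaster := Stmt4Aux.master R (fun z : Fin n × Fin n => (z.2 : ℕ)) hord p lam K hp0 hp1 hlam0.le hK0 Ω
    c0 (fun _ => le_refl 0) hcond
  -- bound the Stmt4Aux.master exponent
  have hSbound : lam * ∑ b ∈ Ω, 2*p*(c0 b + 2*p*((Ω.filter (fun x => R x b)).card : ℝ))
      ≤ lam * ((m:ℝ)/64) := by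
    apply mul_le_mul_of_nonneg_left _ hlam0.le
    have h1 : ∑ b ∈ Ω, 2*p*(c0 b + 2*p*((Ω.filter (fun x => R x b)).card : ℝ))
        = 4*p^2 * ((Ω.sigma (fun b => Ω.filter (fun x => R x b))).card : ℝ) := by
      rw [Finset.card_sigma]
      push_cast
      rw [Finset.mul_sum]
      apply Finset.sum_congr rfl
      intro b _
      rw [hc0def]
      ring
    have h2 : ((Ω.sigma (fun b => Ω.filter (fun x => R x b))).card : ℝ) ≤ (n:ℝ)*(m:ℝ) := by
      have hcS := Stmt4Aux.count_S H
      rw [hHm] at hcS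
      have hcS' := (Nat.cast_le (α := ℝ)).mpr hcS
      have hnm : ((n * m : ℕ) : ℝ) = (n:ℝ)*(m:ℝ) := by push_cast; ring
      rw [hnm] at hcS'
      convert hcS' using 4 with b <;> (try simp only [hRdef]) <;> (try congr!)
    have hsig0 : (0:ℝ) ≤ ((Ω.sigma (fun b => Ω.filter (fun x => R x b))).card : ℝ) := Nat.cast_nonneg _
    rw [h1]
    have ha : 4*p^2 * ((Ω.sigma (fun b => Ω.filter (fun x => R x b))).card : ℝ)
        ≤ 4*p^2*((n:ℝ)*(m:ℝ)) :=
      mul_le_mul_of_nonneg_left h2 (by positivity)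
    have hb : 4*(p^2*(n:ℝ))*(m:ℝ) ≤ 4*(1/256)*(m:ℝ) :=
      mul_le_mul_of_nonneg_right (by linarith) (Nat.cast_nonneg m)
    calc 4*p^2 * ((Ω.sigma (fun b => Ω.filter (fun x => R x b))).card : ℝ)
        ≤ 4*p^2*((n:ℝ)*(m:ℝ)) := ha
      _ = 4*(p^2*(n:ℝ))*(m:ℝ) := by ring
      _ ≤ 4*(1/256)*(m:ℝ) := hb
      _ = (m:ℝ)/64 := by ring
  -- assemble
  calc (∑ D ∈ Ω.powerset,
          if ((m : ℝ) / 16 ≤ (((H ⊓ hatGraph D).edgeSet.ncard : ℕ) : ℝ) ∧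
              ∀ v : Fin n, (((D.filter (fun e => e.1 = v)).card : ℕ) : ℝ) ≤ 5 * p * n - 1)
          then p ^ D.card * (1 - p) ^ (n * (n - 1) - D.card) else 0)
      ≤ ∑ D ∈ Ω.powerset, Real.exp (-(lam * (m/16)))
          * (p ^ D.card * (1 - p) ^ (Ω.card - D.card) * g D) :=
        Finset.sum_le_sum hpoint
    _ = Real.exp (-(lam * (m/16))) * Stmt4Aux.bsum p (1-p) Ω g := by
        rw [Stmt4Aux.bsum, Finset.mul_sum]
    _ ≤ Real.exp (-(lam * (m/16)))
        * Real.exp (lam * ∑ b ∈ Ω, 2*p*(c0 b + 2*p*((Ω.filter (fun x => R x b)).card : ℝ))) := by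
        apply mul_le_mul_of_nonneg_left hmaster (Real.exp_pos _).le
    _ ≤ Real.exp (-(lam * (m/16))) * Real.exp (lam * ((m:ℝ)/64)) := by
        apply mul_le_mul_of_nonneg_left (Real.exp_le_exp.mpr hSbound) (Real.exp_pos _).le
    _ ≤ Real.exp (-(1/128) * (m : ℝ) / Real.sqrt n) := by
        rw [← Real.exp_add]
        apply Real.exp_le_exp.mpr
        rw [le_div_iff₀ hsqpos]
        have hm0 : (0:ℝ) ≤ (m:ℝ) := Nat.cast_nonneg m
        have hprod : (lam * Real.sqrt n) * (m:ℝ) = (1/4) * (m:ℝ) := by rw [hlam']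
        linarith [hprod, hm0]
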